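/- Let X be a metric space with a bounded metric d, let p ≥ 1, and let x₁, x₂, … be a sequence of independent identically distributed X-valued random variables with common Borel distribution μ (with separable support). Let μ_k := (1/k) Σ_{i=1}^k δ_{x_i} denote the empirical measure of the first k samples. Then almost surely diam_p(X, d, μ_k) → diam_p(X, d, μ) as k → ∞. -/

import Mathlib

open MeasureTheory Filter BoundedContinuousFunction
open scoped ENNReal

lemma emp_integral {X : Type*} [MetricSpace X] [MeasurableSpace X] [BorelSpace X]
    (f : X → ℝ) (y : ℕ → X) (k : ℕ) :
    ∫ a, f a ∂((k : ℝ≥0∞)⁻¹ • ∑ i ∈ Finset.range k, Measure.dirac (y i))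
      = (k : ℝ)⁻¹ * ∑ i ∈ Finset.range k, f (y i) := by
  have hint : ∀ i ∈ Finset.range k, Integrable f (Measure.dirac (y i)) := by
    intro i _
    have h : f =ᵐ[Measure.dirac (y i)] (fun _ => f (y i)) := by
      rw [MeasureTheory.ae_dirac_eq]; exact Filter.eventually_pure.2 rfl
    exact (integrable_const (f (y i))).congr h.symm
  rw [integral_smul_measure, integral_finset_sum_measure hint]
  simp [integral_dirac, ENNReal.toReal_inv, smul_eq_mul]


/-- For a bounded metric space `(X, d)`, `p ≥ 1`, and i.i.d. `X`-valued
random variables `x₁, x₂, …` with common Borel distribution `μ` (with separable support),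
the `p`-diameters of the empirical measures `μ_k = (1/k) ∑_{i<k} δ_{x_i}` converge almost
surely to `diam_p(X, d, μ)`. -/
theorem stmt_9 {X : Type*} [MetricSpace X] [MeasurableSpace X] [BorelSpace X]
    (hbdd : ∃ C : ℝ, ∀ a b : X, dist a b ≤ C) (p : ℝ) (hp : 1 ≤ p)
    {Ω : Type*} [MeasurableSpace Ω] (P : Measure Ω) [IsProbabilityMeasure P]
    (x : ℕ → Ω → X) (hmeas : ∀ i, Measurable (x i))
    (μ : Measure X) [IsProbabilityMeasure μ]
    (hsep : ∃ s : Set X, TopologicalSpace.IsSeparable s ∧ μ sᶜ = 0)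
    (hindep : ProbabilityTheory.iIndepFun x P)
    (hident : ∀ i, Measure.map (x i) P = μ) :
    ∀ᵐ ω ∂P, Tendsto
      (fun k : ℕ =>
        (∫ a, ∫ b, dist a b ^ p
            ∂((k : ℝ≥0∞)⁻¹ • ∑ i ∈ Finset.range k, Measure.dirac (x i ω))
            ∂((k : ℝ≥0∞)⁻¹ • ∑ i ∈ Finset.range k, Measure.dirac (x i ω))) ^ (1 / p))
      atTop (nhds ((∫ a, ∫ b, dist a b ^ p ∂μ ∂μ) ^ (1 / p))) := by
  classical
  obtain ⟨C, hC⟩ := hbdd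
  set C0 : ℝ := max C 0 with hC0def
  have hC0nn : (0:ℝ) ≤ C0 := le_max_right _ _
  have hdle : ∀ a b : X, dist a b ≤ C0 := fun a b => (hC a b).trans (le_max_left _ _)
  have hppos : (0:ℝ) < p := lt_of_lt_of_le one_pos hp
  -- the map φ : X → (X →ᵇ ℝ)
  have hcont1 : ∀ a : X, Continuous (fun b => dist a b ^ p) := fun a =>
    Continuous.rpow_const (continuous_const.dist continuous_id) (fun b => Or.inr hppos.le)
  have hbound1 : ∀ a b : X, ‖dist a b ^ p‖ ≤ C0 ^ p := by
    intro a b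
    rw [Real.norm_eq_abs, abs_of_nonneg (Real.rpow_nonneg dist_nonneg p)]
    exact Real.rpow_le_rpow dist_nonneg (hdle a b) hppos.le
  set φ : X → (X →ᵇ ℝ) := fun a =>
    BoundedContinuousFunction.ofNormedAddCommGroup _ (hcont1 a) (C0 ^ p)
      (hbound1 a) with hφdef
  have hφapp : ∀ a b : X, φ a b = dist a b ^ p := fun a b => rfl
  have hφnorm : ∀ a : X, ‖φ a‖ ≤ C0 ^ p := fun a =>
    BoundedContinuousFunction.norm_ofNormedAddCommGroup_le _ (Real.rpow_nonneg hC0nn p) _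
  -- continuity of φ
  have hφcont : Continuous φ := by
    rw [Metric.continuous_iff]
    intro a ε hε
    have hu : Continuous (fun t : ℝ => t ^ p) :=
      Continuous.rpow_const continuous_id (fun t => Or.inr hppos.le)
    have huc : UniformContinuousOn (fun t : ℝ => t ^ p) (Set.Icc (-1 : ℝ) (C0 + 1)) :=
      isCompact_Icc.uniformContinuousOn_of_continuous hu.continuousOn
    rw [Metric.uniformContinuousOn_iff] at huc
    obtain ⟨δ, hδ, hδ'⟩ := huc (ε / 2) (by positivity)
    refine ⟨min δ 1, by positivity, fun a' ha' => ?_⟩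
    have h2 : dist (φ a') (φ a) ≤ ε / 2 := by
      rw [BoundedContinuousFunction.dist_le (by positivity)]
      intro b
      have hmem : ∀ c : X, dist c b ∈ Set.Icc (-1 : ℝ) (C0 + 1) := fun c =>
        ⟨by linarith [dist_nonneg (x := c) (y := b)], by linarith [hdle c b]⟩
      have hd : dist (dist a' b) (dist a b) < δ := by
        rw [Real.dist_eq]
        exact lt_of_le_of_lt (abs_dist_sub_le a' a b) (lt_of_lt_of_le ha' (min_le_left _ _))
      exact le_of_lt (hδ' _ (hmem a') _ (hmem a) hd)
    linarith
  letI : MeasurableSpace (X →ᵇ ℝ) := borel _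
  haveI : BorelSpace (X →ᵇ ℝ) := ⟨rfl⟩
  have hφmeas : Measurable φ := hφcont.measurable
  -- identically distributed
  have hid : ∀ i, ProbabilityTheory.IdentDistrib (x i) (x 0) P P := fun i =>
    ⟨(hmeas i).aemeasurable, (hmeas 0).aemeasurable, by rw [hident i, hident 0]⟩
  -- a.e. separable range
  obtain ⟨s, hs, hμs⟩ := hsep
  obtain ⟨N, hsN, hNmeas, hμN⟩ := exists_measurable_superset_of_null hμs
  have haes : ∀ i, ∀ᵐ ω ∂P, x i ω ∈ s := by
    intro i
    have hPN : P ((x i) ⁻¹' N) = 0 := by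
      have := (hident i) ▸ hμN
      rwa [Measure.map_apply (hmeas i) hNmeas] at this
    refine measure_mono_null (fun ω hω => ?_) hPN
    exact hsN hω
  -- Banach-valued random variables
  set Y : ℕ → Ω → (X →ᵇ ℝ) := fun i ω => φ (x i ω) with hYdef
  have hYmeas : ∀ i, Measurable (Y i) := fun i => hφmeas.comp (hmeas i)
  have hYaesm : ∀ i, AEStronglyMeasurable (Y i) P := by
    intro i
    rw [aestronglyMeasurable_iff_aemeasurable_separable]
    refine ⟨(hYmeas i).aemeasurable, φ '' s, hs.image hφcont, ?_⟩
    filter_upwards [haes i] with ω hω using Set.mem_image_of_mem φ hω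
  have hYint : Integrable (Y 0) P :=
    ⟨hYaesm 0, HasFiniteIntegral.of_bounded (C := C0 ^ p)
      (Filter.Eventually.of_forall fun ω => hφnorm _)⟩
  have hYindep : Pairwise (Function.onFun (ProbabilityTheory.IndepFun · · P) Y) := fun i j hij =>
    (hindep.indepFun hij).comp hφmeas hφmeas
  have hYid : ∀ i, ProbabilityTheory.IdentDistrib (Y i) (Y 0) P P := fun i =>
    (hid i).comp hφmeas
  have A := ProbabilityTheory.strong_law_ae Y hYint hYindep hYid
  -- the mean function F
  set F : X →ᵇ ℝ := ∫ ω, Y 0 ω ∂P with hFdef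
  -- scalar random variables
  set Z : ℕ → Ω → ℝ := fun i ω => F (x i ω) with hZdef
  have hZmeas : ∀ i, Measurable (Z i) := fun i => F.continuous.measurable.comp (hmeas i)
  have hZint : Integrable (Z 0) P :=
    ⟨(hZmeas 0).aestronglyMeasurable, HasFiniteIntegral.of_bounded (C := ‖F‖)
      (Filter.Eventually.of_forall fun ω => F.norm_coe_le_norm _)⟩
  have hZindep : Pairwise (Function.onFun (ProbabilityTheory.IndepFun · · P) Z) := fun i j hij =>
    (hindep.indepFun hij).comp F.continuous.measurable F.continuous.measurable
  have hZid : ∀ i, ProbabilityTheory.IdentDistrib (Z i) (Z 0) P P := fun i =>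
    (hid i).comp F.continuous.measurable
  have B := ProbabilityTheory.strong_law_ae Z hZint hZindep hZid
  -- identify the limit
  have hFa : ∀ a : X, F a = ∫ b, dist a b ^ p ∂μ := by
    intro a
    have h1 : F a = ∫ ω, (Y 0 ω) a ∂P := by
      have := (BoundedContinuousFunction.evalCLM ℝ a).integral_comp_comm hYint
      simpa [BoundedContinuousFunction.evalCLM_apply] using this.symm
    rw [h1]
    have hm : AEStronglyMeasurable (fun b => dist b a ^ p) (Measure.map (x 0) P) :=
      ((Continuous.rpow_const (continuous_id.dist continuous_const)
        (fun b => Or.inr hppos.le)).measurable).aestronglyMeasurable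
    have h2 : ∫ ω, (Y 0 ω) a ∂P = ∫ b, dist b a ^ p ∂μ := by
      rw [← hident 0, integral_map (hmeas 0).aemeasurable hm]
      rfl
    rw [h2]
    exact integral_congr_ae (Filter.Eventually.of_forall fun b => by simp only []; rw [dist_comm])
  -- F is a.e.-strongly measurable w.r.t. μ, hence identify the scalar limit
  have hLim : ∫ ω, Z 0 ω ∂P = ∫ a, ∫ b, dist a b ^ p ∂μ ∂μ := by
    have hm : AEStronglyMeasurable (fun a => F a) (Measure.map (x 0) P) :=
      (F.continuous.measurable).aestronglyMeasurable
    have : ∫ ω, Z 0 ω ∂P = ∫ a, F a ∂μ := by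
      rw [← hident 0, integral_map (hmeas 0).aemeasurable hm]
    rw [this]
    exact integral_congr_ae (Filter.Eventually.of_forall fun a => hFa a)
  rw [hLim] at B
  filter_upwards [A, B] with ω hA hB
  set L := ∫ a, ∫ b, dist a b ^ p ∂μ ∂μ with hL
  set G : ℕ → X →ᵇ ℝ := fun k => (k : ℝ)⁻¹ • ∑ j ∈ Finset.range k, Y j ω with hGdef
  -- the double empirical integral as a sum of evaluations
  have hVeq : ∀ k : ℕ,
      (∫ a, ∫ b, dist a b ^ p
          ∂((k : ℝ≥0∞)⁻¹ • ∑ i ∈ Finset.range k, Measure.dirac (x i ω))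
          ∂((k : ℝ≥0∞)⁻¹ • ∑ i ∈ Finset.range k, Measure.dirac (x i ω)))
      = (k : ℝ)⁻¹ * ∑ i ∈ Finset.range k, (G k) (x i ω) := by
    intro k
    rw [emp_integral]
    congr 1
    refine Finset.sum_congr rfl fun i _ => ?_
    rw [emp_integral]
    have h1 : (G k) (x i ω)
        = (k : ℝ)⁻¹ * ∑ j ∈ Finset.range k, dist (x j ω) (x i ω) ^ p := by
      simp [hGdef, BoundedContinuousFunction.coe_sum, Finset.sum_apply, smul_eq_mul, hYdef, hφapp]
    rw [h1]
    congr 1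
    exact Finset.sum_congr rfl fun j _ => by rw [dist_comm]
  -- decomposition
  have hGF : Tendsto (fun k => ‖G k - F‖) atTop (nhds 0) := by
    have := tendsto_iff_norm_sub_tendsto_zero.mp hA
    exact this
  have hD : Tendsto
      (fun k : ℕ => (k : ℝ)⁻¹ * ∑ i ∈ Finset.range k, ((G k - F) (x i ω)))
      atTop (nhds 0) := by
    refine squeeze_zero_norm (fun k => ?_) hGF
    have hknn : (0:ℝ) ≤ (k : ℝ)⁻¹ := by positivity
    calc ‖(k : ℝ)⁻¹ * ∑ i ∈ Finset.range k, ((G k - F) (x i ω))‖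
        = (k : ℝ)⁻¹ * |∑ i ∈ Finset.range k, ((G k - F) (x i ω))| := by
          rw [Real.norm_eq_abs, abs_mul, abs_of_nonneg hknn]
      _ ≤ (k : ℝ)⁻¹ * ∑ i ∈ Finset.range k, |(G k - F) (x i ω)| :=
          mul_le_mul_of_nonneg_left (Finset.abs_sum_le_sum_abs _ _) hknn
      _ ≤ (k : ℝ)⁻¹ * ∑ i ∈ Finset.range k, ‖G k - F‖ := by
          refine mul_le_mul_of_nonneg_left (Finset.sum_le_sum fun i _ => ?_) hknn
          exact (G k - F).norm_coe_le_norm (x i ω)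
      _ = ((k : ℝ)⁻¹ * (k : ℝ)) * ‖G k - F‖ := by
          rw [Finset.sum_const, Finset.card_range, nsmul_eq_mul, mul_assoc]
      _ ≤ 1 * ‖G k - F‖ := by
          refine mul_le_mul_of_nonneg_right ?_ (norm_nonneg _)
          rcases Nat.eq_zero_or_pos k with hk | hk
          · simp [hk]
          · rw [inv_mul_cancel₀ (by exact_mod_cast hk.ne' : (k:ℝ) ≠ 0)]
      _ = ‖G k - F‖ := one_mul _
  have hS : Tendsto
      (fun k : ℕ => (k : ℝ)⁻¹ * ∑ i ∈ Finset.range k, F (x i ω)) atTop (nhds L) := by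
    have : ∀ k : ℕ, (k : ℝ)⁻¹ • ∑ i ∈ Finset.range k, Z i ω
        = (k : ℝ)⁻¹ * ∑ i ∈ Finset.range k, F (x i ω) := fun k => by
      simp [hZdef, smul_eq_mul]
    exact hB.congr this
  have hV : Tendsto
      (fun k : ℕ => (k : ℝ)⁻¹ * ∑ i ∈ Finset.range k, (G k) (x i ω)) atTop (nhds L) := by
    have hsplit : ∀ k : ℕ,
        (k : ℝ)⁻¹ * ∑ i ∈ Finset.range k, (G k) (x i ω)
        = ((k : ℝ)⁻¹ * ∑ i ∈ Finset.range k, ((G k - F) (x i ω)))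
          + ((k : ℝ)⁻¹ * ∑ i ∈ Finset.range k, F (x i ω)) := by
      intro k
      rw [← mul_add, ← Finset.sum_add_distrib]
      congr 1
      refine Finset.sum_congr rfl fun i _ => ?_
      simp
    have := hD.add hS
    rw [zero_add] at this
    exact this.congr fun k => (hsplit k).symm
  have hfin := hV.rpow_const (p := 1 / p) (Or.inr (by positivity))
  exact hfin.congr fun k => by rw [hVeq k]
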